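/- Let $A, B, X \in \mathbb{M}_n$ be such that the block matrix $M = \begin{bmatrix} A & X \\ X^* & B \end{bmatrix} \in \mathbb{M}_{2n}$ is positive semi-definite. Then there exist unitary matrices $U, V \in \mathbb{M}_{2n}$ such that $M = U \begin{bmatrix} \frac{A+B}{2} + \mathrm{Im}\,X & 0 \\ 0 & 0 \end{bmatrix} U^* + V \begin{bmatrix} 0 & 0 \\ 0 & \frac{A+B}{2} - \mathrm{Im}\,X \end{bmatrix} V^*$. -/

import Mathlib

open Matrix
open scoped ComplexOrder

/-- The absolute value `|Z| = (Zᴴ Z)^(1/2)` of a square complex matrix. -/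
noncomputable def matAbs {m : Type*} [Fintype m] [DecidableEq m]
    (Z : Matrix m m ℂ) : Matrix m m ℂ :=
  ((Matrix.posSemidef_conjTranspose_mul_self Z).1.eigenvectorUnitary : Matrix m m ℂ) *
    Matrix.diagonal ((↑) ∘ (Real.sqrt ∘ (Matrix.posSemidef_conjTranspose_mul_self Z).1.eigenvalues)) *
    (star (Matrix.posSemidef_conjTranspose_mul_self Z).1.eigenvectorUnitary : Matrix m m ℂ)

/-- Functional calculus: apply `f : ℝ → ℝ` to the eigenvalues of a Hermitian matrix
(junk value `0` if the matrix is not Hermitian). -/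
noncomputable def hermApply {m : Type*} [Fintype m] [DecidableEq m]
    (f : ℝ → ℝ) (S : Matrix m m ℂ) : Matrix m m ℂ :=
  if hS : S.IsHermitian then
    (hS.eigenvectorUnitary : Matrix m m ℂ) *
      Matrix.diagonal (fun i => (f (hS.eigenvalues i) : ℂ)) *
      (star (hS.eigenvectorUnitary : Matrix m m ℂ))
  else 0

/-- Real power of a positive semi-definite matrix by functional calculus. -/
noncomputable def matPow {m : Type*} [Fintype m] [DecidableEq m]
    (S : Matrix m m ℂ) (p : ℝ) : Matrix m m ℂ :=
  hermApply (fun x => x ^ p) S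

/-- A symmetric (unitarily invariant) norm on complex `m × m` matrices. -/
structure IsSymmetricNorm {m : Type*} [Fintype m] [DecidableEq m]
    (N : Matrix m m ℂ → ℝ) : Prop where
  add_le : ∀ A B, N (A + B) ≤ N A + N B
  smul : ∀ (c : ℂ) (A), N (c • A) = ‖c‖ * N A
  eq_zero_of : ∀ A, N A = 0 → A = 0
  unitary_mul_left : ∀ (U : Matrix.unitaryGroup m ℂ) (A), N (U * A) = N A
  mul_unitary_right : ∀ (U : Matrix.unitaryGroup m ℂ) (A), N (A * U) = N A

/-- Eigenvalues of a Hermitian matrix (junk value `0` if not Hermitian). -/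
noncomputable def eigVals {m : Type*} [Fintype m] [DecidableEq m]
    (Z : Matrix m m ℂ) : m → ℝ :=
  if hZ : Z.IsHermitian then hZ.eigenvalues else 0

/-- Eigenvalues of a Hermitian `n × n` matrix listed in decreasing order. -/
noncomputable def eigDown {n : ℕ} (Z : Matrix (Fin n) (Fin n) ℂ) : Fin n → ℝ :=
  fun i => (eigVals Z ∘ Tuple.sort (eigVals Z)) i.rev

/-- `Z ^ ↓`: the diagonal matrix listing the eigenvalues of `Z` in decreasing order. -/
noncomputable def downMat {n : ℕ} (Z : Matrix (Fin n) (Fin n) ℂ) : Matrix (Fin n) (Fin n) ℂ :=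
  Matrix.diagonal (fun i => (eigDown Z i : ℂ))

/-- Schatten `p`-norm. -/
noncomputable def schattenNorm {m : Type*} [Fintype m] [DecidableEq m]
    (p : ℝ) (Z : Matrix m m ℂ) : ℝ :=
  (∑ i, eigVals (matAbs Z) i ^ p) ^ (1 / p)

/-- Operator norm (largest singular value). -/
noncomputable def opNormInf {m : Type*} [Fintype m] [DecidableEq m]
    (Z : Matrix m m ℂ) : ℝ :=
  ⨆ i, Real.sqrt (eigVals (Zᴴ * Z) i)

/-- Numerical range. -/
def numRange {m : Type*} [Fintype m] (X : Matrix m m ℂ) : Set ℂ :=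
  {z | ∃ x : m → ℂ, ∑ i, ‖x i‖ ^ 2 = 1 ∧ dotProduct (star x) (X *ᵥ x) = z}

/-- Numerical radius. -/
noncomputable def numRadius {m : Type*} [Fintype m] (X : Matrix m m ℂ) : ℝ :=
  sSup ((fun z : ℂ => ‖z‖) '' numRange X)
section Helpers
open Polynomial

lemma charpoly_conj_aux {m : Type*} [Fintype m] [DecidableEq m] {R : Type*} [CommRing R]
    (P Q M : Matrix m m R) (hPQ : P * Q = 1) :
    (P * M * Q).charpoly = M.charpoly := by
  have hmapPQ : P.map (C : R →+* R[X]) * Q.map C = 1 := by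
    rw [← Matrix.map_mul, hPQ, Matrix.map_one _ (map_zero _) (map_one _)]
  have key : Matrix.charmatrix (P * M * Q) =
      P.map (C : R →+* R[X]) * M.charmatrix * Q.map C := by
    unfold Matrix.charmatrix
    rw [mul_sub, sub_mul]
    congr 1
    · rw [mul_assoc, (Matrix.scalar_commute (X : R[X]) (fun r' => Commute.all _ _) _).eq,
        ← mul_assoc, hmapPQ, one_mul]
    · simp only [RingHom.mapMatrix_apply]
      rw [← Matrix.map_mul, ← Matrix.map_mul]
  rw [Matrix.charpoly, key, Matrix.det_mul, Matrix.det_mul, Matrix.charpoly,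
    mul_comm (P.map C).det, mul_assoc, ← Matrix.det_mul, hmapPQ, Matrix.det_one, mul_one]

lemma charpoly_mul_comm' {m : Type*} [Fintype m] [DecidableEq m]
    (A B : Matrix m m ℂ) : (A * B).charpoly = (B * A).charpoly := by
  have hPQ : (Matrix.fromBlocks 1 A 0 1 : Matrix (m ⊕ m) (m ⊕ m) ℂ) *
      Matrix.fromBlocks 1 (-A) 0 1 = 1 := by
    rw [← Matrix.fromBlocks_one]
    simp [Matrix.fromBlocks_multiply]
  have key : (Matrix.fromBlocks 1 A 0 1 : Matrix (m ⊕ m) (m ⊕ m) ℂ) *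
      Matrix.fromBlocks 0 0 B (B * A) * Matrix.fromBlocks 1 (-A) 0 1 =
      Matrix.fromBlocks (A * B) 0 B 0 := by
    simp [Matrix.fromBlocks_multiply, mul_assoc]
  have h := charpoly_conj_aux _ _ (Matrix.fromBlocks 0 0 B (B * A)) hPQ
  rw [key, Matrix.charpoly_fromBlocks_zero₁₂, Matrix.charpoly_fromBlocks_zero₁₂] at h
  have hz : (0 : Matrix m m ℂ).charpoly ≠ 0 := (Matrix.charpoly_monic _).ne_zero
  have h' : (A * B).charpoly * (0 : Matrix m m ℂ).charpoly =
      (B * A).charpoly * (0 : Matrix m m ℂ).charpoly := by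
    rw [h, mul_comm]
  exact mul_right_cancel₀ hz h'

lemma exists_perm_of_map_eq {m : Type*} [Fintype m] [DecidableEq m]
    (f g : m → ℂ)
    (h : Multiset.map f Finset.univ.val = Multiset.map g Finset.univ.val) :
    ∃ σ : Equiv.Perm m, f = g ∘ σ := by
  classical
  have hcard : ∀ b : ℂ, Fintype.card {x // g x = b} = Fintype.card {x // f x = b} := by
    intro b
    rw [Fintype.card_subtype, Fintype.card_subtype]
    have hcount : ∀ f' : m → ℂ, (Finset.univ.filter (fun x => f' x = b)).card =
        Multiset.count b (Multiset.map f' Finset.univ.val) := by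
      intro f'
      rw [Multiset.count_map]
      simp only [eq_comm (b := b)]
      rfl
    rw [hcount, hcount, h]
  let e : ∀ b : ℂ, {x // f x = b} ≃ {x // g x = b} := fun b => Fintype.equivOfCardEq (hcard b).symm
  refine ⟨(Equiv.sigmaFiberEquiv f).symm.trans ((Equiv.sigmaCongrRight e).trans
    (Equiv.sigmaFiberEquiv g)), funext fun x => ?_⟩
  exact ((e (f x)) ⟨x, rfl⟩).2.symm

lemma charpoly_diagonal' {m : Type*} [Fintype m] [DecidableEq m] (d : m → ℂ) :
    (Matrix.diagonal d).charpoly = ∏ i, (X - C (d i)) := by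
  have hc : Matrix.charmatrix (Matrix.diagonal d) =
      Matrix.diagonal (fun i => (X : ℂ[X]) - C (d i)) := by
    ext i j
    by_cases hij : i = j
    · subst hij
      rw [Matrix.charmatrix_apply_eq, Matrix.diagonal_apply_eq, Matrix.diagonal_apply_eq]
    · rw [Matrix.charmatrix_apply_ne _ _ _ hij, Matrix.diagonal_apply_ne _ hij,
        Matrix.diagonal_apply_ne _ hij, map_zero, neg_zero]
  rw [Matrix.charpoly, hc, Matrix.det_diagonal]

lemma eig_multiset_eq {m : Type*} [Fintype m] [DecidableEq m]
    {H₁ H₂ : Matrix m m ℂ} (h₁ : H₁.IsHermitian) (h₂ : H₂.IsHermitian)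
    (h : H₁.charpoly = H₂.charpoly) :
    Multiset.map (fun i => (h₁.eigenvalues i : ℂ)) Finset.univ.val =
      Multiset.map (fun i => (h₂.eigenvalues i : ℂ)) Finset.univ.val := by
  have key : ∀ (H : Matrix m m ℂ) (hH : H.IsHermitian),
      H.charpoly = ((Finset.univ.val.map (fun i => (hH.eigenvalues i : ℂ))).map
        (fun a => (X : ℂ[X]) - C a)).prod := by
    intro H hH
    have hU : (hH.eigenvectorUnitary : Matrix m m ℂ) *
        star (hH.eigenvectorUnitary : Matrix m m ℂ) = 1 :=
      (Matrix.mem_unitaryGroup_iff).mp (hH.eigenvectorUnitary).2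
    conv_lhs => rw [hH.spectral_theorem]; simp only [Unitary.conjStarAlgAut_apply, Unitary.coe_star]
    rw [charpoly_conj_aux _ _ _ hU, charpoly_diagonal', Finset.prod_eq_multiset_prod,
      Multiset.map_map]
    rfl
  have := congrArg Polynomial.roots ((key H₁ h₁).symm.trans (h.trans (key H₂ h₂)))
  rwa [Polynomial.roots_multiset_prod_X_sub_C, Polynomial.roots_multiset_prod_X_sub_C] at this

lemma herm_unitary_conj {m : Type*} [Fintype m] [DecidableEq m]
    {H₁ H₂ : Matrix m m ℂ} (h₁ : H₁.IsHermitian) (h₂ : H₂.IsHermitian)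
    (h : H₁.charpoly = H₂.charpoly) :
    ∃ U : Matrix.unitaryGroup m ℂ,
      H₁ = (U : Matrix m m ℂ) * H₂ * (U : Matrix m m ℂ)ᴴ := by
  classical
  obtain ⟨σ, hσ⟩ := exists_perm_of_map_eq _ _ (eig_multiset_eq h₁ h₂ h)
  set P : Matrix m m ℂ := (1 : Matrix m m ℂ).submatrix σ id with hP
  set P' : Matrix m m ℂ := (1 : Matrix m m ℂ).submatrix id σ with hP'
  have hPP' : P * P' = 1 := by
    ext i j
    simp [P, P', Matrix.mul_apply, Matrix.one_apply, Equiv.apply_eq_iff_eq]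
  have hP'P : P' * P = 1 := by
    ext i j
    rw [Matrix.mul_apply]
    have step : ∀ x : m, P' i x * P x j =
        (if i = σ x then (1:ℂ) else 0) * (if σ x = j then (1:ℂ) else 0) := by
      intro x; simp [P, P', Matrix.one_apply]
    rw [Finset.sum_congr rfl fun x _ => step x,
      Fintype.sum_equiv σ _ (fun y => (if i = y then (1:ℂ) else 0) * (if y = j then (1:ℂ) else 0))
        (fun x => rfl)]
    simp only [ite_mul, one_mul, zero_mul, Finset.sum_ite_eq, Finset.mem_univ, if_true,
      Matrix.one_apply]
  have hPH : Pᴴ = P' := by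
    rw [hP, hP', Matrix.conjTranspose_submatrix, Matrix.conjTranspose_one]
  have happ : ∀ (D : Matrix m m ℂ) i j, (P * D * P') i j = D (σ i) (σ j) := by
    intro D i j
    rw [Matrix.mul_apply]
    have col : ∀ k, (P * D) i k = D (σ i) k := by
      intro k
      rw [Matrix.mul_apply]
      simp [P, Matrix.one_apply, ite_mul, Finset.sum_ite_eq]
    simp only [col]
    simp [P', Matrix.one_apply, mul_ite, Finset.sum_ite_eq']
  have hdiag : Matrix.diagonal (fun i => (h₁.eigenvalues i : ℂ)) =
      P * Matrix.diagonal (fun i => (h₂.eigenvalues i : ℂ)) * P' := by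
    ext i j
    rw [happ]
    by_cases hij : i = j
    · subst hij
      rw [Matrix.diagonal_apply_eq, Matrix.diagonal_apply_eq]
      exact congrFun hσ i
    · rw [Matrix.diagonal_apply_ne _ hij, Matrix.diagonal_apply_ne]
      exact fun hc => hij (σ.injective hc)
  have hPmem : P ∈ Matrix.unitaryGroup m ℂ := by
    constructor
    · rw [Matrix.star_eq_conjTranspose, hPH]; exact hP'P
    · rw [Matrix.star_eq_conjTranspose, hPH]; exact hPP'
  set U₁ : Matrix m m ℂ := (h₁.eigenvectorUnitary : Matrix m m ℂ) with hU₁def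
  set U₂ : Matrix m m ℂ := (h₂.eigenvectorUnitary : Matrix m m ℂ) with hU₂def
  have hU₂l : star U₂ * U₂ = 1 := (Unitary.mem_iff.mp h₂.eigenvectorUnitary.2).1
  have hU₂r : U₂ * star U₂ = 1 := (Unitary.mem_iff.mp h₂.eigenvectorUnitary.2).2
  refine ⟨h₁.eigenvectorUnitary * ⟨P, hPmem⟩ * star h₂.eigenvectorUnitary, ?_⟩
  have hcoe : ((h₁.eigenvectorUnitary * ⟨P, hPmem⟩ * star h₂.eigenvectorUnitary :
      Matrix.unitaryGroup m ℂ) : Matrix m m ℂ) = U₁ * P * star U₂ := rfl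
  rw [hcoe, ← Matrix.star_eq_conjTranspose]
  have hD₂ : star U₂ * H₂ * U₂ = Matrix.diagonal (fun i => (h₂.eigenvalues i : ℂ)) := by
    conv_lhs => rw [h₂.spectral_theorem]; simp only [Unitary.conjStarAlgAut_apply, Unitary.coe_star]
    rw [← hU₂def]
    calc star U₂ * (U₂ * Matrix.diagonal (RCLike.ofReal ∘ h₂.eigenvalues) * star U₂) * U₂
        = (star U₂ * U₂) * Matrix.diagonal (RCLike.ofReal ∘ h₂.eigenvalues) * (star U₂ * U₂) := by
          simp only [mul_assoc]
      _ = Matrix.diagonal (fun i => (h₂.eigenvalues i : ℂ)) := by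
          rw [hU₂l, one_mul, mul_one]; rfl
  have hsP : star P = P' := by rw [Matrix.star_eq_conjTranspose, hPH]
  calc H₁ = U₁ * Matrix.diagonal (fun i => (h₁.eigenvalues i : ℂ)) * star U₁ := by
        conv_lhs => rw [h₁.spectral_theorem]
        rfl
    _ = U₁ * (P * (star U₂ * H₂ * U₂) * P') * star U₁ := by rw [hD₂, ← hdiag]
    _ = U₁ * P * star U₂ * H₂ * star (U₁ * P * star U₂) := by
        simp only [Matrix.star_mul, star_star, hsP, mul_assoc]

lemma psd_block_decomp {k : Type*} [Fintype k] [DecidableEq k]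
    (N : Matrix (k ⊕ k) (k ⊕ k) ℂ) (hN : N.PosSemidef) :
    ∃ U V : Matrix.unitaryGroup (k ⊕ k) ℂ,
      N = (U : Matrix (k ⊕ k) (k ⊕ k) ℂ) *
            Matrix.fromBlocks N.toBlocks₁₁ 0 0 0 * (U : Matrix (k ⊕ k) (k ⊕ k) ℂ)ᴴ
        + (V : Matrix (k ⊕ k) (k ⊕ k) ℂ) *
            Matrix.fromBlocks 0 0 0 N.toBlocks₂₂ * (V : Matrix (k ⊕ k) (k ⊕ k) ℂ)ᴴ := by
  classical
  set S : Matrix (k ⊕ k) (k ⊕ k) ℂ := (open scoped MatrixOrder in CFC.sqrt N) with hSdef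
  have hSS : S * S = N := by
    open scoped MatrixOrder in exact CFC.sqrt_mul_sqrt_self N hN.nonneg
  have hSherm : S.IsHermitian := by
    open scoped MatrixOrder in exact (CFC.sqrt_nonneg N).posSemidef.1
  set E₁ : Matrix (k ⊕ k) (k ⊕ k) ℂ := Matrix.fromBlocks 1 0 0 0 with hE₁
  set E₂ : Matrix (k ⊕ k) (k ⊕ k) ℂ := Matrix.fromBlocks 0 0 0 1 with hE₂
  have hE₁H : E₁ᴴ = E₁ := by simp [hE₁, Matrix.fromBlocks_conjTranspose]
  have hE₂H : E₂ᴴ = E₂ := by simp [hE₂, Matrix.fromBlocks_conjTranspose]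
  have hE₁sq : E₁ * E₁ = E₁ := by simp [hE₁, Matrix.fromBlocks_multiply]
  have hE₂sq : E₂ * E₂ = E₂ := by simp [hE₂, Matrix.fromBlocks_multiply]
  have hTT₁ : (E₁ * S)ᴴ * (E₁ * S) = S * E₁ * S := by
    rw [Matrix.conjTranspose_mul, hE₁H, hSherm.eq, mul_assoc, ← mul_assoc E₁, hE₁sq, ← mul_assoc]
  have hTT₂ : (E₂ * S)ᴴ * (E₂ * S) = S * E₂ * S := by
    rw [Matrix.conjTranspose_mul, hE₂H, hSherm.eq, mul_assoc, ← mul_assoc E₂, hE₂sq, ← mul_assoc]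
  have hG₁ : (E₁ * S) * (E₁ * S)ᴴ = Matrix.fromBlocks N.toBlocks₁₁ 0 0 0 := by
    rw [Matrix.conjTranspose_mul, hE₁H, hSherm.eq, ← mul_assoc (E₁ * S) S E₁,
      mul_assoc E₁ S S, hSS]
    rw [← Matrix.fromBlocks_toBlocks N, hE₁]
    simp [Matrix.fromBlocks_multiply]
  have hG₂ : (E₂ * S) * (E₂ * S)ᴴ = Matrix.fromBlocks 0 0 0 N.toBlocks₂₂ := by
    rw [Matrix.conjTranspose_mul, hE₂H, hSherm.eq, ← mul_assoc (E₂ * S) S E₂,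
      mul_assoc E₂ S S, hSS]
    rw [← Matrix.fromBlocks_toBlocks N, hE₂]
    simp [Matrix.fromBlocks_multiply]
  have hherm₁ : (S * E₁ * S).IsHermitian := hTT₁ ▸ Matrix.isHermitian_conjTranspose_mul_self _
  have hherm₂ : (S * E₂ * S).IsHermitian := hTT₂ ▸ Matrix.isHermitian_conjTranspose_mul_self _
  have hherm₁' : (Matrix.fromBlocks N.toBlocks₁₁ 0 0 0 :
      Matrix (k ⊕ k) (k ⊕ k) ℂ).IsHermitian := hG₁ ▸ Matrix.isHermitian_mul_conjTranspose_self _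
  have hherm₂' : (Matrix.fromBlocks 0 0 0 N.toBlocks₂₂ :
      Matrix (k ⊕ k) (k ⊕ k) ℂ).IsHermitian := hG₂ ▸ Matrix.isHermitian_mul_conjTranspose_self _
  have hchar₁ : (S * E₁ * S).charpoly =
      (Matrix.fromBlocks N.toBlocks₁₁ 0 0 0 : Matrix (k ⊕ k) (k ⊕ k) ℂ).charpoly := by
    rw [← hTT₁, ← hG₁, _root_.charpoly_mul_comm']
  have hchar₂ : (S * E₂ * S).charpoly =
      (Matrix.fromBlocks 0 0 0 N.toBlocks₂₂ : Matrix (k ⊕ k) (k ⊕ k) ℂ).charpoly := by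
    rw [← hTT₂, ← hG₂, _root_.charpoly_mul_comm']
  obtain ⟨U, hU⟩ := herm_unitary_conj hherm₁ hherm₁' hchar₁
  obtain ⟨V, hV⟩ := herm_unitary_conj hherm₂ hherm₂' hchar₂
  refine ⟨U, V, ?_⟩
  rw [← hU, ← hV, ← hSS]
  have h12 : E₁ + E₂ = 1 := by
    rw [hE₁, hE₂, ← Matrix.fromBlocks_one]
    simp [Matrix.fromBlocks_add]
  calc S * S = S * (E₁ + E₂) * S := by rw [h12, mul_one]
    _ = S * E₁ * S + S * E₂ * S := by rw [mul_add, add_mul]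


end Helpers

theorem decomposition_im {n : ℕ} (A B X : Matrix (Fin n) (Fin n) ℂ)
    (hM : (Matrix.fromBlocks A X Xᴴ B).PosSemidef) :
    ∃ U V : Matrix.unitaryGroup (Fin n ⊕ Fin n) ℂ,
      Matrix.fromBlocks A X Xᴴ B =
        (U : Matrix (Fin n ⊕ Fin n) (Fin n ⊕ Fin n) ℂ) *
          Matrix.fromBlocks ((1 / 2 : ℂ) • (A + B) + ((2 * Complex.I)⁻¹ : ℂ) • (X - Xᴴ)) 0 0 0 *
          (U : Matrix (Fin n ⊕ Fin n) (Fin n ⊕ Fin n) ℂ)ᴴ +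
        (V : Matrix (Fin n ⊕ Fin n) (Fin n ⊕ Fin n) ℂ) *
          Matrix.fromBlocks 0 0 0 ((1 / 2 : ℂ) • (A + B) - ((2 * Complex.I)⁻¹ : ℂ) • (X - Xᴴ)) *
          (V : Matrix (Fin n ⊕ Fin n) (Fin n ⊕ Fin n) ℂ)ᴴ := by
  classical
  set M : Matrix (Fin n ⊕ Fin n) (Fin n ⊕ Fin n) ℂ := Matrix.fromBlocks A X Xᴴ B with hMdef
  set c : ℂ := ((Real.sqrt 2 : ℝ) : ℂ)⁻¹ with hcdef
  have hsqrt2 : ((Real.sqrt 2 : ℝ) : ℂ) * ((Real.sqrt 2 : ℝ) : ℂ) = 2 := by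
    rw [← Complex.ofReal_mul, Real.mul_self_sqrt (by norm_num)]
    norm_num
  have hsqrt2ne : ((Real.sqrt 2 : ℝ) : ℂ) ≠ 0 := by
    intro h
    rw [h, zero_mul] at hsqrt2
    exact two_ne_zero hsqrt2.symm
  have hcc : c * c * 2 = 1 := by
    rw [hcdef, ← mul_inv, hsqrt2]
    norm_num
  have hstarc : star c = c := by
    rw [hcdef, star_inv₀, Complex.star_def, Complex.conj_ofReal]
  set W₀ : Matrix (Fin n ⊕ Fin n) (Fin n ⊕ Fin n) ℂ :=
    Matrix.fromBlocks 1 (Complex.I • 1) (Complex.I • 1) 1 with hW₀def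
  have hW₀H : W₀ᴴ = Matrix.fromBlocks 1 ((-Complex.I) • 1) ((-Complex.I) • 1) 1 := by
    rw [hW₀def, Matrix.fromBlocks_conjTranspose]
    simp [Matrix.conjTranspose_smul, Complex.star_def, Complex.conj_I]
  have hW₀W₀H : W₀ * W₀ᴴ = (2 : ℂ) • 1 := by
    rw [hW₀H, hW₀def]
    simp only [Matrix.fromBlocks_multiply, Matrix.smul_mul, Matrix.mul_smul, smul_smul,
      Complex.I_mul_I, ← Matrix.fromBlocks_one, Matrix.fromBlocks_smul]
    rw [Matrix.fromBlocks_inj]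
    norm_num [two_smul]
  have hW₀HW₀ : W₀ᴴ * W₀ = (2 : ℂ) • 1 := by
    rw [hW₀H, hW₀def]
    simp only [Matrix.fromBlocks_multiply, Matrix.smul_mul, Matrix.mul_smul, smul_smul,
      Complex.I_mul_I, ← Matrix.fromBlocks_one, Matrix.fromBlocks_smul]
    rw [Matrix.fromBlocks_inj]
    norm_num [two_smul]
  set W : Matrix (Fin n ⊕ Fin n) (Fin n ⊕ Fin n) ℂ := c • W₀ with hWdef
  have hWH : Wᴴ = c • W₀ᴴ := by rw [hWdef, Matrix.conjTranspose_smul, hstarc]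
  have hWWH : W * Wᴴ = 1 := by
    rw [hWdef, hWH, Matrix.smul_mul, Matrix.mul_smul, smul_smul, hW₀W₀H, smul_smul, hcc, one_smul]
  have hWHW : Wᴴ * W = 1 := by
    rw [hWdef, hWH, Matrix.smul_mul, Matrix.mul_smul, smul_smul, hW₀HW₀, smul_smul, hcc, one_smul]
  have hWmem : W ∈ Matrix.unitaryGroup (Fin n ⊕ Fin n) ℂ := by
    constructor
    · rw [Matrix.star_eq_conjTranspose]; exact hWHW
    · rw [Matrix.star_eq_conjTranspose]; exact hWWH
  set N : Matrix (Fin n ⊕ Fin n) (Fin n ⊕ Fin n) ℂ := W * M * Wᴴ with hNdef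
  have hNpsd : N.PosSemidef := hM.mul_mul_conjTranspose_same W
  have hprod : W₀ * M * W₀ᴴ = Matrix.fromBlocks
      (A + B + Complex.I • Xᴴ + (-Complex.I) • X)
      ((-Complex.I) • A + Complex.I • B + X + Xᴴ)
      (Complex.I • A + (-Complex.I) • B + X + Xᴴ)
      (A + B + (-Complex.I) • Xᴴ + Complex.I • X) := by
    rw [hW₀H, hW₀def, hMdef]
    simp only [Matrix.fromBlocks_multiply, Matrix.smul_mul, Matrix.mul_smul, smul_smul, mul_neg,
      Matrix.one_mul, Matrix.mul_one, neg_mul, Complex.I_mul_I, neg_neg, one_smul, neg_smul]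
    rw [Matrix.fromBlocks_inj]
    refine ⟨?_, ?_, ?_, ?_⟩ <;> (match_scalars <;> simp [Complex.I_sq])
  have hcc2 : c * c = (2 : ℂ)⁻¹ := eq_inv_of_mul_eq_one_left (by linear_combination hcc)
  have hinv : ((2 * Complex.I)⁻¹ : ℂ) = -(2⁻¹) * Complex.I := by
    rw [mul_inv, Complex.inv_I]; ring
  have hNblocks : N = Matrix.fromBlocks
      ((1 / 2 : ℂ) • (A + B) + ((2 * Complex.I)⁻¹ : ℂ) • (X - Xᴴ))
      ((c * c) • ((-Complex.I) • A + Complex.I • B + X + Xᴴ))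
      ((c * c) • (Complex.I • A + (-Complex.I) • B + X + Xᴴ))
      ((1 / 2 : ℂ) • (A + B) - ((2 * Complex.I)⁻¹ : ℂ) • (X - Xᴴ)) := by
    have hN2 : N = (c * c) • (W₀ * M * W₀ᴴ) := by
      rw [hNdef, hWdef, hWH, Matrix.smul_mul, Matrix.mul_smul, Matrix.smul_mul, smul_smul]
    rw [hN2, hprod, Matrix.fromBlocks_smul, Matrix.fromBlocks_inj]
    refine ⟨?_, rfl, rfl, ?_⟩ <;>
      (rw [hcc2, hinv]; match_scalars <;> simp [Complex.I_sq] <;> ring)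
  obtain ⟨U₀, V₀, hdec⟩ := psd_block_decomp N hNpsd
  have ht11 : N.toBlocks₁₁ = (1 / 2 : ℂ) • (A + B) + ((2 * Complex.I)⁻¹ : ℂ) • (X - Xᴴ) := by
    rw [hNblocks]; rfl
  have ht22 : N.toBlocks₂₂ = (1 / 2 : ℂ) • (A + B) - ((2 * Complex.I)⁻¹ : ℂ) • (X - Xᴴ) := by
    rw [hNblocks]; rfl
  rw [ht11, ht22] at hdec
  refine ⟨star (⟨W, hWmem⟩ : Matrix.unitaryGroup (Fin n ⊕ Fin n) ℂ) * U₀,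
    star (⟨W, hWmem⟩ : Matrix.unitaryGroup (Fin n ⊕ Fin n) ℂ) * V₀, ?_⟩
  have hcoeU : ((star (⟨W, hWmem⟩ : Matrix.unitaryGroup (Fin n ⊕ Fin n) ℂ) * U₀ :
      Matrix.unitaryGroup (Fin n ⊕ Fin n) ℂ) : Matrix (Fin n ⊕ Fin n) (Fin n ⊕ Fin n) ℂ) =
      Wᴴ * (U₀ : Matrix (Fin n ⊕ Fin n) (Fin n ⊕ Fin n) ℂ) := rfl
  have hcoeV : ((star (⟨W, hWmem⟩ : Matrix.unitaryGroup (Fin n ⊕ Fin n) ℂ) * V₀ :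
      Matrix.unitaryGroup (Fin n ⊕ Fin n) ℂ) : Matrix (Fin n ⊕ Fin n) (Fin n ⊕ Fin n) ℂ) =
      Wᴴ * (V₀ : Matrix (Fin n ⊕ Fin n) (Fin n ⊕ Fin n) ℂ) := rfl
  rw [hcoeU, hcoeV, Matrix.conjTranspose_mul, Matrix.conjTranspose_mul,
    Matrix.conjTranspose_conjTranspose]
  have hM' : M = Wᴴ * N * W := by
    rw [hNdef, ← mul_assoc, ← mul_assoc, hWHW, one_mul, mul_assoc, hWHW, mul_one]
  conv_lhs => rw [hMdef]
  rw [← hMdef, hM', hdec, mul_add, add_mul]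
  simp only [mul_assoc]
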